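/- (Stability of the scheme for the pure degenerate equation, uniformly in h and ε.) Let d ≥ 1, 0 < λ ≤ Λ, θ ≥ 1, R > 0 and K_f, K_g ≥ 0. Then there exist h₀ > 0 depending only on λ and a constant C > 0 depending only on d, λ, θ, R, K_f and K_g such that the following holds. For every ε ∈ (0,1), every h ∈ (0, h₀), every grid Ω̄_h = Ω_h ∪ ∂Ω_h contained in the closed ball of radius R centred at the origin, every Isaacs data with ellipticity constants (λ,Λ), every f : Ω_h → ℝ with 0 ≤ f ≤ K_f, every g : ∂Ω_h → ℝ with |g| ≤ K_g, and every grid function u : Ω̄_h → ℝ satisfying G_h(u, x) = 0 for every x ∈ Ω̄_h, one has max_{x ∈ Ω̄_h} |u(x)| ≤ C. -/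

import Mathlib

open scoped BigOperators
open MeasureTheory
open scoped Classical

noncomputable section

namespace Paper

/-- `ℝᵈ` with the Euclidean structure. -/
abbrev E (d : ℕ) := EuclideanSpace ℝ (Fin d)

/-- The standard basis vector `eᵢ` of `ℝᵈ`. -/
def e (d : ℕ) (i : Fin d) : E d := EuclideanSpace.single i 1

/-- For a symmetric matrix, the maximum of the absolute values of its eigenvalues. -/
def specNorm {d : ℕ} (M : Matrix (Fin d) (Fin d) ℝ) : ℝ :=
  if h : M.IsHermitian then ⨆ i, |h.eigenvalues i| else 0

/-- `(λ,Λ)`-uniform ellipticity of `F : S(d) → ℝ`. -/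
def UniformlyElliptic (d : ℕ) (lam Lam : ℝ) (F : Matrix (Fin d) (Fin d) ℝ → ℝ) : Prop :=
  ∀ M N : Matrix (Fin d) (Fin d) ℝ, M.IsHermitian → N.PosSemidef →
    lam * specNorm N ≤ F M - F (M + N) ∧ F M - F (M + N) ≤ Lam * specNorm N

/-- The upwind discretisation `|D_h u (x)|²`. -/
def upwindSq (d : ℕ) (h : ℝ) (u : E d → ℝ) (x : E d) : ℝ :=
  (1 / h ^ 2) * ∑ i : Fin d,
    max (max (u x - u (x + h • e d i)) (u x - u (x - h • e d i))) 0 ^ 2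

/-- The monotone discretisation `L_h^A u (x)` of `Tr (A D²u)`. -/
def Lh (d : ℕ) (h : ℝ) (A : Matrix (Fin d) (Fin d) ℝ) (u : E d → ℝ) (x : E d) : ℝ :=
  (∑ i : Fin d, (A i i - ∑ j ∈ Finset.univ.erase i, |A i j|) *
      ((u (x + h • e d i) + u (x - h • e d i) - 2 * u x) / h ^ 2)) +
  ∑ i : Fin d, ∑ j ∈ Finset.univ.filter (fun j => i < j),
    (max (A i j) 0 *
        ((u (x + h • (e d i + e d j)) + u (x - h • (e d i + e d j)) - 2 * u x) / h ^ 2) +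
      max (-A i j) 0 *
        ((u (x + h • (e d i - e d j)) + u (x - h • (e d i - e d j)) - 2 * u x) / h ^ 2))

/-- Diagonal dominance of a matrix. -/
def DiagDominant {d : ℕ} (A : Matrix (Fin d) (Fin d) ℝ) : Prop :=
  ∀ i, ∑ j ∈ Finset.univ.erase i, |A i j| ≤ A i i

/-- Isaacs data with ellipticity constants `(λ, Λ)`: symmetric, diagonally dominant matrices
with `λ I ≤ A_{α,β} ≤ Λ I`. -/
def IsaacsData (d : ℕ) {ιA ιB : Type*} (lam Lam : ℝ)
    (A : ιA → ιB → Matrix (Fin d) (Fin d) ℝ) : Prop :=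
  ∀ a b, (A a b).IsHermitian ∧ DiagDominant (A a b) ∧
    (A a b - lam • (1 : Matrix (Fin d) (Fin d) ℝ)).PosSemidef ∧
    (Lam • (1 : Matrix (Fin d) (Fin d) ℝ) - A a b).PosSemidef

/-- Discretised Isaacs operator. -/
def Fh (d : ℕ) {ιA ιB : Type*} (h : ℝ) (A : ιA → ιB → Matrix (Fin d) (Fin d) ℝ)
    (u : E d → ℝ) (x : E d) : ℝ :=
  ⨆ a : ιA, ⨅ b : ιB, -(Lh d h (A a b) u x)

/-- A finite grid `Ω̄_h = Ω_h ∪ ∂Ω_h` whose interior points have all stencil points in the grid. -/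
structure Grid (d : ℕ) (h : ℝ) where
  interior : Finset (E d)
  boundary : Finset (E d)
  disj : Disjoint interior boundary
  nonempty : (interior ∪ boundary).Nonempty
  stencil_ax : ∀ x ∈ interior, ∀ i : Fin d,
    x + h • e d i ∈ interior ∪ boundary ∧ x - h • e d i ∈ interior ∪ boundary
  stencil_diag : ∀ x ∈ interior, ∀ i j : Fin d, i < j →
    x + h • (e d i + e d j) ∈ interior ∪ boundary ∧
    x - h • (e d i + e d j) ∈ interior ∪ boundary ∧
    x + h • (e d i - e d j) ∈ interior ∪ boundary ∧
    x - h • (e d i - e d j) ∈ interior ∪ boundary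

/-- The finite difference scheme `G_h` for the regularised pure degenerate equation. -/
def scheme (d : ℕ) {ιA ιB : Type*} {h : ℝ} (ε θ : ℝ)
    (A : ιA → ιB → Matrix (Fin d) (Fin d) ℝ) (G : Grid d h)
    (f g : E d → ℝ) (u : E d → ℝ) (x : E d) : ℝ :=
  if x ∈ G.interior then
    ε * u x + Fh d h A u x - f x / (ε + upwindSq d h u x) ^ (θ / 2)
  else u x - g x

/-- The finite difference scheme `G_h` for the regularised free transmission problem. -/
def schemeT (d : ℕ) {ιA ιB : Type*} {h : ℝ} (ε : ℝ) (θe : ℝ → ℝ)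
    (A : ιA → ιB → Matrix (Fin d) (Fin d) ℝ) (G : Grid d h)
    (f g : E d → ℝ) (u : E d → ℝ) (x : E d) : ℝ :=
  if x ∈ G.interior then
    ε * u x + Fh d h A u x - f x / (ε + upwindSq d h u x) ^ (θe (u x) / 2)
  else u x - g x

/-- The properties of the regularised degeneracy exponent `θ_ε` used in the transmission scheme. -/
def ThetaInterp (ε θ₁ θ₂ : ℝ) (θe : ℝ → ℝ) : Prop :=
  Monotone θe ∧ (∀ t, θ₁ ≤ θe t ∧ θe t ≤ θ₂) ∧
    (∀ t, t ≤ -ε → θe t = θ₁) ∧ (∀ t, ε ≤ t → θe t = θ₂)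

/-- The Hessian matrix of `φ : ℝᵈ → ℝ` at `x`. -/
def hessianMatrix (d : ℕ) (φ : E d → ℝ) (x : E d) : Matrix (Fin d) (Fin d) ℝ :=
  Matrix.of fun i j => fderiv ℝ (fun y => fderiv ℝ φ y (e d j)) x (e d i)

/-- The piecewise-linear interpolation `Θ_ε` between the degeneracy rates `θ₁` and `θ₂`. -/
def ThetaStep (θ₁ θ₂ ε t : ℝ) : ℝ :=
  if t ≤ -ε then θ₁
  else if t < ε then (θ₂ - θ₁) / (2 * ε) * t + (θ₁ + θ₂) / 2
  else θ₂

/-! ### Auxiliary lemmas for the stability proof -/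

lemma psd_diag {d : ℕ} {M : Matrix (Fin d) (Fin d) ℝ} (h : M.PosSemidef) (i : Fin d) :
    0 ≤ M i i := h.diag_nonneg

lemma abs_coord {d : ℕ} (x : E d) (i : Fin d) : |x i| ≤ ‖x‖ := by
  rw [EuclideanSpace.norm_eq, ← Real.sqrt_sq_eq_abs]
  apply Real.sqrt_le_sqrt
  calc x i ^ 2 = ‖x i‖ ^ 2 := by rw [Real.norm_eq_abs, sq_abs]
  _ ≤ _ := Finset.single_le_sum (f := fun j => ‖x j‖ ^ 2) (fun j _ => by positivity)
        (Finset.mem_univ i)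

lemma upwindSq_nonneg (d : ℕ) (h : ℝ) (u : E d → ℝ) (x : E d) : 0 ≤ upwindSq d h u x := by
  unfold upwindSq
  positivity

lemma Lh_mono (d : ℕ) (h : ℝ) (hh : 0 < h) (A : Matrix (Fin d) (Fin d) ℝ)
    (hA : DiagDominant A) (u v : E d → ℝ) (x : E d)
    (hax : ∀ i : Fin d,
      u (x + h • e d i) + u (x - h • e d i) - 2 * u x ≤
      v (x + h • e d i) + v (x - h • e d i) - 2 * v x)
    (hdp : ∀ i j : Fin d, i < j →
      u (x + h • (e d i + e d j)) + u (x - h • (e d i + e d j)) - 2 * u x ≤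
      v (x + h • (e d i + e d j)) + v (x - h • (e d i + e d j)) - 2 * v x)
    (hdm : ∀ i j : Fin d, i < j →
      u (x + h • (e d i - e d j)) + u (x - h • (e d i - e d j)) - 2 * u x ≤
      v (x + h • (e d i - e d j)) + v (x - h • (e d i - e d j)) - 2 * v x) :
    Lh d h A u x ≤ Lh d h A v x := by
  have h2 : (0:ℝ) < h ^ 2 := by positivity
  unfold Lh
  apply add_le_add
  · apply Finset.sum_le_sum; intro i _
    exact mul_le_mul_of_nonneg_left ((div_le_div_iff_of_pos_right h2).mpr (hax i))
      (sub_nonneg.mpr (hA i))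
  · apply Finset.sum_le_sum; intro i _
    apply Finset.sum_le_sum; intro j hj
    have hij := (Finset.mem_filter.mp hj).2
    exact add_le_add
      (mul_le_mul_of_nonneg_left ((div_le_div_iff_of_pos_right h2).mpr (hdp i j hij)) (le_max_right _ _))
      (mul_le_mul_of_nonneg_left ((div_le_div_iff_of_pos_right h2).mpr (hdm i j hij)) (le_max_right _ _))

lemma Lh_const (d : ℕ) (h c : ℝ) (A : Matrix (Fin d) (Fin d) ℝ) (x : E d) :
    Lh d h A (fun _ => c) x = 0 := by
  have hz : (c + c - 2 * c) / h ^ 2 = 0 := by ring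
  simp [Lh, hz]

lemma neg_Lh_le (d : ℕ) (h : ℝ) (A : Matrix (Fin d) (Fin d) ℝ) (Lam : ℝ)
    (hA : DiagDominant A) (hup : ∀ i, A i i ≤ Lam) (u : E d → ℝ) (x : E d) :
    -(Lh d h A u x) ≤
      Lam * ((∑ i : Fin d, |(u (x + h • e d i) + u (x - h • e d i) - 2 * u x) / h ^ 2|) +
        ∑ i : Fin d, ∑ j ∈ Finset.univ.filter (fun j => i < j),
          (|(u (x + h • (e d i + e d j)) + u (x - h • (e d i + e d j)) - 2 * u x) / h ^ 2| +
           |(u (x + h • (e d i - e d j)) + u (x - h • (e d i - e d j)) - 2 * u x) / h ^ 2|)) := by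
  have gen : ∀ (m δ : ℝ), 0 ≤ m → m ≤ Lam → -(m * δ) ≤ Lam * |δ| := by
    intro m δ hm0 hmL
    calc -(m * δ) = m * (-δ) := by ring
    _ ≤ m * |δ| := mul_le_mul_of_nonneg_left (neg_le_abs δ) hm0
    _ ≤ Lam * |δ| := mul_le_mul_of_nonneg_right hmL (abs_nonneg δ)
  have habs : ∀ i, (0:ℝ) ≤ ∑ j ∈ Finset.univ.erase i, |A i j| :=
    fun i => Finset.sum_nonneg fun j _ => abs_nonneg _
  have hLb : ∀ i j : Fin d, i < j → |A i j| ≤ Lam := by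
    intro i j hij
    calc |A i j| ≤ ∑ k ∈ Finset.univ.erase i, |A i k| := by
          exact Finset.single_le_sum (f := fun k => |A i k|) (fun k _ => abs_nonneg _)
            (Finset.mem_erase.mpr ⟨hij.ne', Finset.mem_univ j⟩)
      _ ≤ A i i := hA i
      _ ≤ Lam := hup i
  rw [Lh, neg_add, mul_add]
  apply add_le_add
  · rw [← Finset.sum_neg_distrib, Finset.mul_sum]
    apply Finset.sum_le_sum
    intro i _
    exact gen _ _ (sub_nonneg.mpr (hA i)) (by have := habs i; have := hup i; linarith)
  · rw [← Finset.sum_neg_distrib, Finset.mul_sum]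
    apply Finset.sum_le_sum
    intro i _
    rw [← Finset.sum_neg_distrib, Finset.mul_sum]
    apply Finset.sum_le_sum
    intro j hj
    have hij := (Finset.mem_filter.mp hj).2
    have hL := hLb i j hij
    have hL0 : (0:ℝ) ≤ Lam := (abs_nonneg _).trans hL
    have e1 := gen (max (A i j) 0)
      ((u (x + h • (e d i + e d j)) + u (x - h • (e d i + e d j)) - 2 * u x) / h ^ 2)
      (le_max_right _ _) (max_le ((le_abs_self _).trans hL) hL0)
    have e2 := gen (max (-A i j) 0)
      ((u (x + h • (e d i - e d j)) + u (x - h • (e d i - e d j)) - 2 * u x) / h ^ 2)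
      (le_max_right _ _) (max_le ((neg_le_abs _).trans hL) hL0)
    linarith

lemma le_Fh {ιA ιB : Type} [Nonempty ιA] [Nonempty ιB] (v : ιA → ιB → ℝ) (c U : ℝ)
    (h1 : ∀ a b, c ≤ v a b) (h2 : ∀ a b, v a b ≤ U) :
    c ≤ ⨆ a, ⨅ b, v a b := by
  have hbA : BddAbove (Set.range fun a => ⨅ b, v a b) := by
    refine ⟨U, ?_⟩
    rintro _ ⟨a, rfl⟩
    have hbB : BddBelow (Set.range (v a)) := by
      refine ⟨c, ?_⟩; rintro _ ⟨b, rfl⟩; exact h1 a b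
    exact (ciInf_le hbB (Classical.arbitrary ιB)).trans (h2 a _)
  exact le_trans (le_ciInf (h1 (Classical.arbitrary ιA)))
    (le_ciSup hbA (Classical.arbitrary ιA))

lemma iSupInf_nonpos {ιA ιB : Type} [Nonempty ιB] (v : ιA → ιB → ℝ)
    (h1 : ∀ a b, v a b ≤ 0) : (⨆ a, ⨅ b, v a b) ≤ 0 :=
  Real.iSup_nonpos fun a => by
    by_cases hb : BddBelow (Set.range (v a))
    · exact (ciInf_le hb (Classical.arbitrary ιB)).trans (h1 a _)
    · exact le_of_eq (Real.iInf_of_not_bddBelow hb)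

lemma Lh_psi (d : ℕ) (hd : 0 < d) (h B M : ℝ) (hh : h ≠ 0)
    (A : Matrix (Fin d) (Fin d) ℝ) (x : E d) :
    Lh d h A (fun y => M - B * Real.exp (y ⟨0, hd⟩)) x =
      -(B * Real.exp (x ⟨0, hd⟩) * ((Real.exp h + Real.exp (-h) - 2) / h ^ 2)) *
        A ⟨0, hd⟩ ⟨0, hd⟩ := by
  have h2 : (h:ℝ) ^ 2 ≠ 0 := pow_ne_zero _ hh
  set i₀ : Fin d := ⟨0, hd⟩ with hi₀
  set D : ℝ := -(B * Real.exp (x i₀) * ((Real.exp h + Real.exp (-h) - 2) / h ^ 2)) with hD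
  have coordp : ∀ v : E d, (x + h • v) i₀ = x i₀ + h * v i₀ := fun v => by
    simp [PiLp.add_apply, PiLp.smul_apply, smul_eq_mul]
  have coordm : ∀ v : E d, (x - h • v) i₀ = x i₀ - h * v i₀ := fun v => by
    simp [PiLp.sub_apply, PiLp.smul_apply, smul_eq_mul]
  have key1 : ∀ v : E d, v i₀ = 1 →
      ((M - B * Real.exp ((x + h • v) i₀)) + (M - B * Real.exp ((x - h • v) i₀))
        - 2 * (M - B * Real.exp (x i₀))) / h ^ 2 = D := by
    intro v hv
    rw [coordp, coordm, hv, mul_one, hD]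
    rw [show x i₀ + h = x i₀ + h from rfl, Real.exp_add,
      show x i₀ - h = x i₀ + (-h) by ring, Real.exp_add]
    field_simp
    ring
  have key0 : ∀ v : E d, v i₀ = 0 →
      ((M - B * Real.exp ((x + h • v) i₀)) + (M - B * Real.exp ((x - h • v) i₀))
        - 2 * (M - B * Real.exp (x i₀))) / h ^ 2 = 0 := by
    intro v hv
    rw [coordp, coordm, hv, mul_zero, add_zero, sub_zero]
    rw [show (M - B * Real.exp (x i₀)) + (M - B * Real.exp (x i₀))
        - 2 * (M - B * Real.exp (x i₀)) = 0 by ring, zero_div]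
  have eA : ∀ i : Fin d, e d i i₀ = if i = i₀ then 1 else 0 := fun i => by
    simp [e, EuclideanSpace.single_apply, eq_comm]
  simp only [Lh]
  have hax : ∀ i ∈ Finset.univ, (A i i - ∑ j ∈ Finset.univ.erase i, |A i j|) *
      (((M - B * Real.exp ((x + h • e d i) i₀)) + (M - B * Real.exp ((x - h • e d i) i₀))
        - 2 * (M - B * Real.exp (x i₀))) / h ^ 2) =
      if i = i₀ then (A i i - ∑ j ∈ Finset.univ.erase i, |A i j|) * D else 0 := by
    intro i _
    by_cases hii : i = i₀
    · rw [if_pos hii, key1 (e d i) (by rw [eA, if_pos hii])]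
    · rw [if_neg hii, key0 (e d i) (by rw [eA, if_neg hii]), mul_zero]
  have hcross : ∀ i ∈ Finset.univ,
      (∑ j ∈ Finset.univ.filter (fun j => i < j),
        (max (A i j) 0 *
          (((M - B * Real.exp ((x + h • (e d i + e d j)) i₀)) +
            (M - B * Real.exp ((x - h • (e d i + e d j)) i₀))
            - 2 * (M - B * Real.exp (x i₀))) / h ^ 2) +
          max (-A i j) 0 *
          (((M - B * Real.exp ((x + h • (e d i - e d j)) i₀)) +
            (M - B * Real.exp ((x - h • (e d i - e d j)) i₀))
            - 2 * (M - B * Real.exp (x i₀))) / h ^ 2))) =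
      if i = i₀ then (∑ j ∈ Finset.univ.filter (fun j => i < j), |A i j|) * D else 0 := by
    intro i _
    have hj0 : ∀ j ∈ Finset.univ.filter (fun j => i < j), j ≠ i₀ := by
      intro j hj heq
      have hij : i < j := (Finset.mem_filter.mp hj).2
      rw [heq] at hij
      exact Nat.not_lt_zero _ (Fin.lt_def.mp hij)
    by_cases hii : i = i₀
    · rw [if_pos hii]
      rw [Finset.sum_congr rfl (fun j hj => ?_), ← Finset.sum_mul]
      have hvp : (e d i + e d j) i₀ = 1 := by
        rw [PiLp.add_apply, eA, eA, if_pos hii, if_neg (hj0 j hj)]; ring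
      have hvm : (e d i - e d j) i₀ = 1 := by
        rw [PiLp.sub_apply, eA, eA, if_pos hii, if_neg (hj0 j hj)]; ring
      rw [key1 _ hvp, key1 _ hvm, ← add_mul, max_zero_add_max_neg_zero_eq_abs_self]
    · rw [if_neg hii]
      apply Finset.sum_eq_zero
      intro j hj
      have hvp : (e d i + e d j) i₀ = 0 := by
        rw [PiLp.add_apply, eA, eA, if_neg hii, if_neg (hj0 j hj)]; ring
      have hvm : (e d i - e d j) i₀ = 0 := by
        rw [PiLp.sub_apply, eA, eA, if_neg hii, if_neg (hj0 j hj)]; ring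
      rw [key0 _ hvp, key0 _ hvm, mul_zero, mul_zero, add_zero]
  rw [Finset.sum_congr rfl hax, Finset.sum_congr rfl hcross,
    Finset.sum_ite_eq' Finset.univ i₀, Finset.sum_ite_eq' Finset.univ i₀,
    if_pos (Finset.mem_univ i₀), if_pos (Finset.mem_univ i₀)]
  have hset : Finset.univ.erase i₀ = Finset.univ.filter (fun j => i₀ < j) := by
    ext j
    simp only [Finset.mem_erase, Finset.mem_univ, and_true, Finset.mem_filter, true_and]
    constructor
    · intro hne
      have hv : 0 < (j : ℕ) := Nat.pos_of_ne_zero fun h0 => hne (Fin.ext h0)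
      exact Fin.lt_def.mpr hv
    · intro hlt
      exact hlt.ne'
  rw [hset]
  ring


set_option maxHeartbeats 2000000 in
/-- Stability of the scheme for the pure degenerate equation,
uniformly in `h` and `ε`: solutions of `G_h(u, ·) = 0` are bounded by a constant
depending only on `d, λ, θ, R, K_f, K_g` (with `h₀` depending only on `λ`). -/
theorem scheme_stability (lam : ℝ) (hlam : 0 < lam) :
    ∃ h₀ : ℝ, 0 < h₀ ∧
    ∀ (d : ℕ), 1 ≤ d →
    ∀ (θ R Kf Kg : ℝ), 1 ≤ θ → 0 < R → 0 ≤ Kf → 0 ≤ Kg →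
    ∃ C : ℝ, 0 < C ∧
    ∀ (Lam : ℝ), lam ≤ Lam →
    ∀ (ε : ℝ), 0 < ε → ε < 1 →
    ∀ (h : ℝ), 0 < h → h < h₀ →
    ∀ (G : Grid d h), (∀ x ∈ G.interior ∪ G.boundary, ‖x‖ ≤ R) →
    ∀ (ιA ιB : Type) (_ : Nonempty ιA) (_ : Nonempty ιB)
      (A : ιA → ιB → Matrix (Fin d) (Fin d) ℝ), IsaacsData d lam Lam A →
    ∀ (f : E d → ℝ), (∀ x ∈ G.interior, 0 ≤ f x ∧ f x ≤ Kf) →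
    ∀ (g : E d → ℝ), (∀ x ∈ G.boundary, |g x| ≤ Kg) →
    ∀ (u : E d → ℝ), (∀ x ∈ G.interior ∪ G.boundary, scheme d ε θ A G f g u x = 0) →
    ∀ x ∈ G.interior ∪ G.boundary, |u x| ≤ C := by
  refine ⟨1, one_pos, ?_⟩
  intro d hd θ R Kf Kg hθ hR hKf hKg
  have hd0 : 0 < d := hd
  set B : ℝ := 4 * Real.exp R * (1 + Kf / lam) with hB
  set MM : ℝ := Kg + B * Real.exp R with hMM
  have hB0 : 0 < B := by rw [hB]; positivity
  have hMMK : Kg ≤ MM := by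
    have : 0 < B * Real.exp R := by positivity
    linarith [hMM.le, hMM.ge]
  refine ⟨MM + 1, by nlinarith [Real.exp_pos R], ?_⟩
  intro Lam hLam ε hε hε1 h hh hh1 G hGR ιA ιB hNA hNB Amat hIsa f hf g hg u hu
  haveI := hNA; haveI := hNB
  set ψ : E d → ℝ := fun y => MM - B * Real.exp (y ⟨0, hd0⟩) with hψ
  -- basic facts about ψ on the grid
  have hcoordR : ∀ y ∈ G.interior ∪ G.boundary,
      -R ≤ y ⟨0, hd0⟩ ∧ y ⟨0, hd0⟩ ≤ R := by
    intro y hy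
    have h1 := abs_coord y ⟨0, hd0⟩
    have h2 := hGR y hy
    exact abs_le.mp (h1.trans h2)
  have hexp_le : ∀ y ∈ G.interior ∪ G.boundary,
      Real.exp (y ⟨0, hd0⟩) ≤ Real.exp R := fun y hy =>
    Real.exp_le_exp.mpr (hcoordR y hy).2
  have hexp_ge : ∀ y ∈ G.interior ∪ G.boundary,
      Real.exp (-R) ≤ Real.exp (y ⟨0, hd0⟩) := fun y hy =>
    Real.exp_le_exp.mpr (hcoordR y hy).1
  have hψ_ge : ∀ y ∈ G.interior ∪ G.boundary, Kg ≤ ψ y := by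
    intro y hy
    have h1 := hexp_le y hy
    have h3 : B * Real.exp (y ⟨0, hd0⟩) ≤ B * Real.exp R :=
      mul_le_mul_of_nonneg_left h1 hB0.le
    show Kg ≤ MM - B * Real.exp (y ⟨0, hd0⟩)
    linarith [hMM.le, hMM.ge]
  have hψ_le : ∀ y : E d, ψ y ≤ MM := by
    intro y
    show MM - B * Real.exp (y ⟨0, hd0⟩) ≤ MM
    have : 0 ≤ B * Real.exp (y ⟨0, hd0⟩) := by positivity
    linarith
  have hBexpR : B * Real.exp (-R) = 4 * (1 + Kf / lam) := by
    rw [hB, Real.exp_neg]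
    have := Real.exp_pos R
    field_simp
  have hBeR1 : 1 ≤ B * Real.exp (-R) := by
    rw [hBexpR]
    have : 0 ≤ Kf / lam := by positivity
    linarith
  -- the discrete second difference of exp along the first axis
  have hq : (1:ℝ)/4 ≤ (Real.exp h + Real.exp (-h) - 2) / h ^ 2 := by
    have h2 : (0:ℝ) < h ^ 2 := by positivity
    have e1 : h/2 + 1 ≤ Real.exp (h/2) := Real.add_one_le_exp _
    have e3 : Real.exp (h/2) * Real.exp (h/2) = Real.exp h := by
      rw [← Real.exp_add]; ring_nf
    have e4 : Real.exp (-(h/2)) * Real.exp (-(h/2)) = Real.exp (-h) := by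
      rw [← Real.exp_add]; ring_nf
    have e5 : Real.exp (h/2) * Real.exp (-(h/2)) = 1 := by
      rw [← Real.exp_add]; simp
    have hb1 : Real.exp (-(h/2)) ≤ 1 := by
      nlinarith [mul_nonneg (by linarith : (0:ℝ) ≤ Real.exp (h/2) - 1)
        (Real.exp_pos (-(h/2))).le]
    have hs : h/2 ≤ Real.exp (h/2) - Real.exp (-(h/2)) := by linarith
    have hs2 : (h/2)^2 ≤ (Real.exp (h/2) - Real.exp (-(h/2)))^2 :=
      pow_le_pow_left₀ (by linarith) hs 2
    have hid : (Real.exp (h/2) - Real.exp (-(h/2)))^2 = Real.exp h + Real.exp (-h) - 2 := by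
      rw [sub_sq, pow_two, pow_two, e3, e4, mul_assoc, e5]
      ring
    rw [le_div_iff₀ h2]
    nlinarith [hs2, hid]
  -- uniform ellipticity bounds on the diagonal entries
  have hdiag_lo : ∀ a b (i : Fin d), lam ≤ Amat a b i i := by
    intro a b i
    have := psd_diag (hIsa a b).2.2.1 i
    simp only [Matrix.sub_apply, Matrix.smul_apply, Matrix.one_apply_eq, smul_eq_mul,
      mul_one] at this
    linarith
  have hdiag_hi : ∀ a b (i : Fin d), Amat a b i i ≤ Lam := by
    intro a b i
    have := psd_diag (hIsa a b).2.2.2 i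
    simp only [Matrix.sub_apply, Matrix.smul_apply, Matrix.one_apply_eq, smul_eq_mul,
      mul_one] at this
    linarith
  -- lower bound : u ≥ -Kg on the grid
  obtain ⟨x₁, hx₁S, hx₁min⟩ := Finset.exists_min_image (G.interior ∪ G.boundary) u G.nonempty
  have hlow : ∀ y ∈ G.interior ∪ G.boundary, -Kg ≤ u y := by
    have hx₁lb : -Kg ≤ u x₁ := by
      by_cases hint : x₁ ∈ G.interior
      · have hsch := hu x₁ hx₁S
        simp only [scheme, if_pos hint] at hsch
        have hFh : Fh d h Amat u x₁ ≤ 0 := by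
          rw [Fh]
          apply iSupInf_nonpos
          intro a b
          have hLh0 : 0 ≤ Lh d h (Amat a b) u x₁ := by
            have hm := Lh_mono d h hh (Amat a b) (hIsa a b).2.1 (fun _ => u x₁) u x₁
              (fun i => by
                obtain ⟨m1, m2⟩ := G.stencil_ax x₁ hint i
                have c1 := hx₁min _ m1; have c2 := hx₁min _ m2
                linarith)
              (fun i j hij => by
                obtain ⟨p1, p2, p3, p4⟩ := G.stencil_diag x₁ hint i j hij
                have c1 := hx₁min _ p1; have c2 := hx₁min _ p2
                linarith)
              (fun i j hij => by
                obtain ⟨p1, p2, p3, p4⟩ := G.stencil_diag x₁ hint i j hij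
                have c3 := hx₁min _ p3; have c4 := hx₁min _ p4
                linarith)
            rwa [Lh_const] at hm
          linarith
        have hden : 0 < (ε + upwindSq d h u x₁) ^ (θ/2) :=
          Real.rpow_pos_of_pos (by linarith [upwindSq_nonneg d h u x₁]) _
        have hquot : 0 ≤ f x₁ / (ε + upwindSq d h u x₁) ^ (θ/2) :=
          div_nonneg (hf x₁ hint).1 hden.le
        have h1 : ε * 0 ≤ ε * u x₁ := by
          rw [mul_zero]; linarith
        have := le_of_mul_le_mul_left h1 hε
        linarith
      · have hbdy : x₁ ∈ G.boundary := Or.resolve_left (Finset.mem_union.mp hx₁S) hint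
        have hsch := hu x₁ hx₁S
        simp only [scheme, if_neg hint] at hsch
        have := (abs_le.mp (hg x₁ hbdy)).1
        linarith
    intro y hy
    exact hx₁lb.trans (hx₁min y hy)
  -- upper bound : u ≤ ψ ≤ MM on the grid, via a maximum point of u - ψ
  obtain ⟨x₀, hx₀S, hx₀max⟩ := Finset.exists_max_image (G.interior ∪ G.boundary)
    (fun y => u y - ψ y) G.nonempty
  have hcomp : ∀ y ∈ G.interior ∪ G.boundary, u y - u x₀ ≤ ψ y - ψ x₀ := by
    intro y hy
    have hb : u y - ψ y ≤ u x₀ - ψ x₀ := hx₀max y hy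
    linarith
  have hmaxle : u x₀ - ψ x₀ ≤ 0 := by
    by_cases hint : x₀ ∈ G.interior
    · -- interior maximum point
      have hKfFh : Kf ≤ Fh d h Amat u x₀ := by
        have hlowv : ∀ a b, Kf ≤ -(Lh d h (Amat a b) u x₀) := by
          intro a b
          have hmono : Lh d h (Amat a b) u x₀ ≤ Lh d h (Amat a b) ψ x₀ := by
            apply Lh_mono d h hh _ (hIsa a b).2.1 u ψ x₀
            · intro i
              obtain ⟨m1, m2⟩ := G.stencil_ax x₀ hint i
              have c1 := hcomp _ m1; have c2 := hcomp _ m2; linarith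
            · intro i j hij
              obtain ⟨p1, p2, p3, p4⟩ := G.stencil_diag x₀ hint i j hij
              have c1 := hcomp _ p1; have c2 := hcomp _ p2; linarith
            · intro i j hij
              obtain ⟨p1, p2, p3, p4⟩ := G.stencil_diag x₀ hint i j hij
              have c3 := hcomp _ p3; have c4 := hcomp _ p4; linarith
          have hpsiv := Lh_psi d hd0 h B MM (ne_of_gt hh) (Amat a b) x₀
          rw [← hψ] at hpsiv
          have hdlo := hdiag_lo a b ⟨0, hd0⟩
          have hex := hexp_ge x₀ hx₀S
          have hq0 : (0:ℝ) ≤ (Real.exp h + Real.exp (-h) - 2) / h ^ 2 :=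
            le_trans (by norm_num) hq
          have hstep : B * Real.exp (-R) * (1/4) * lam ≤
              B * Real.exp (x₀ ⟨0, hd0⟩) * ((Real.exp h + Real.exp (-h) - 2) / h ^ 2) *
                (Amat a b ⟨0, hd0⟩ ⟨0, hd0⟩) := by
            have s1 : B * Real.exp (-R) ≤ B * Real.exp (x₀ ⟨0, hd0⟩) :=
              mul_le_mul_of_nonneg_left hex hB0.le
            have s2 : B * Real.exp (-R) * (1/4) ≤
                B * Real.exp (x₀ ⟨0, hd0⟩) * ((Real.exp h + Real.exp (-h) - 2) / h ^ 2) :=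
              mul_le_mul s1 hq (by norm_num) (by positivity)
            exact mul_le_mul s2 hdlo hlam.le
              (mul_nonneg (by positivity) hq0)
          have hKfB : Kf ≤ B * Real.exp (-R) * (1/4) * lam := by
            have hcomp4 : B * Real.exp (-R) * (1/4) * lam = lam + Kf := by
              rw [hBexpR]; field_simp
            linarith [hcomp4.le, hcomp4.ge]
          linarith [hmono, hstep, hKfB, hpsiv.le, hpsiv.ge]
        rw [Fh]
        exact le_Fh _ Kf _ hlowv
          (fun a b => neg_Lh_le d h (Amat a b) Lam (hIsa a b).2.1 (hdiag_hi a b) u x₀)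
      -- the upwind gradient of u at x₀ is at least 1
      have hup1 : 1 ≤ upwindSq d h u x₀ := by
        obtain ⟨m1, _⟩ := G.stencil_ax x₀ hint ⟨0, hd0⟩
        have hc := hcomp _ m1
        have hcoord : (x₀ + h • e d ⟨0, hd0⟩) ⟨0, hd0⟩ = x₀ ⟨0, hd0⟩ + h := by
          simp [e, PiLp.add_apply, PiLp.smul_apply, EuclideanSpace.single_apply]
        have hψdiff : h ≤ ψ x₀ - ψ (x₀ + h • e d ⟨0, hd0⟩) := by
          show h ≤ (MM - B * Real.exp (x₀ ⟨0, hd0⟩)) -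
            (MM - B * Real.exp ((x₀ + h • e d ⟨0, hd0⟩) ⟨0, hd0⟩))
          rw [hcoord, Real.exp_add]
          have h1 : h + 1 ≤ Real.exp h := Real.add_one_le_exp h
          have h2 := hexp_ge x₀ hx₀S
          have h3 : (1:ℝ) ≤ B * Real.exp (x₀ ⟨0, hd0⟩) :=
            le_trans hBeR1 (mul_le_mul_of_nonneg_left h2 hB0.le)
          have h4 : 1 * h ≤ (B * Real.exp (x₀ ⟨0, hd0⟩)) * (Real.exp h - 1) :=
            mul_le_mul h3 (by linarith) hh.le (by positivity)
          nlinarith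
        have hmax1 : h ≤ max (max (u x₀ - u (x₀ + h • e d ⟨0, hd0⟩))
            (u x₀ - u (x₀ - h • e d ⟨0, hd0⟩))) 0 :=
          le_trans (by linarith) ((le_max_left _ _).trans (le_max_left _ _))
        have hsum : h ^ 2 ≤ ∑ i : Fin d,
            max (max (u x₀ - u (x₀ + h • e d i)) (u x₀ - u (x₀ - h • e d i))) 0 ^ 2 := by
          refine le_trans (pow_le_pow_left₀ hh.le hmax1 2) ?_
          exact Finset.single_le_sum
            (f := fun i => max (max (u x₀ - u (x₀ + h • e d i)) (u x₀ - u (x₀ - h • e d i))) 0 ^ 2)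
            (fun i _ => by positivity) (Finset.mem_univ (⟨0, hd0⟩ : Fin d))
        rw [upwindSq]
        calc (1:ℝ) = (1 / h ^ 2) * h ^ 2 := by field_simp
        _ ≤ _ := mul_le_mul_of_nonneg_left hsum (by positivity)
      have hsch := hu x₀ hx₀S
      simp only [scheme, if_pos hint] at hsch
      have hden1 : 1 ≤ (ε + upwindSq d h u x₀) ^ (θ/2) :=
        Real.one_le_rpow (by linarith) (by linarith)
      have hfden : f x₀ / (ε + upwindSq d h u x₀) ^ (θ/2) ≤ Kf :=
        le_trans (div_le_self (hf x₀ hint).1 hden1) (hf x₀ hint).2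
      have h1 : ε * u x₀ ≤ ε * 0 := by
        rw [mul_zero]; linarith
      have hux0 : u x₀ ≤ 0 := le_of_mul_le_mul_left h1 hε
      have := hψ_ge x₀ hx₀S
      linarith
    · have hbdy : x₀ ∈ G.boundary := Or.resolve_left (Finset.mem_union.mp hx₀S) hint
      have hsch := hu x₀ hx₀S
      simp only [scheme, if_neg hint] at hsch
      have hgk := (abs_le.mp (hg x₀ hbdy)).2
      have := hψ_ge x₀ hx₀S
      linarith
  -- conclusion
  intro x hx
  have hub : u x ≤ MM := by
    have hb : u x - ψ x ≤ u x₀ - ψ x₀ := hx₀max x hx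
    have := hψ_le x
    linarith
  have hlb := hlow x hx
  rw [abs_le]
  constructor <;> linarith

end Paper
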